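/- In the free left distributive magma on one generator, the relation <_L is irreflexive; equivalently, no element a satisfies a = (...((a·b_1)·b_2)...)·b_n for any n ≥ 1 and elements b_1, ..., b_n. -/

import Mathlib

/-- Equivalence of terms under the left distributive law. -/
inductive LDRel : FreeMagma Unit → FreeMagma Unit → Prop
  | ld : ∀ a b c, LDRel (a * (b * c)) ((a * b) * (a * c))
  | refl : ∀ a, LDRel a a
  | symm : ∀ {a b}, LDRel a b → LDRel b a
  | trans : ∀ {a b c}, LDRel a b → LDRel b c → LDRel a c
  | mul_congr : ∀ {a b c d}, LDRel a b → LDRel c d → LDRel (a * c) (b * d)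

/-- The free left distributive magma on one generator. -/
def FreeLD : Type := Quot LDRel

/-- Multiplication on the free left distributive magma. -/
def FreeLD.mul : FreeLD → FreeLD → FreeLD :=
  Quot.map₂ (· * ·) (fun a _ _ h => LDRel.mul_congr (LDRel.refl a) h)
    (fun _ _ b h => LDRel.mul_congr h (LDRel.refl b))

/-- The generator `x` of the free left distributive magma. -/
def FreeLD.x : FreeLD := Quot.mk _ (FreeMagma.of ())

/-- `LtL mul u w` : `w = (...((u·c₁)·c₂)...)·cₙ` for some `n ≥ 1`. -/
def LtL {M : Type*} (mul : M → M → M) (u w : M) : Prop :=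
  ∃ l : List M, l ≠ [] ∧ w = l.foldl mul u

open FreeGroup

abbrev F := FreeGroup ℕ

def sh : F →* F := FreeGroup.map Nat.succ

@[simp] lemma sh_of (i : ℕ) : sh (of i) = of (i+1) := by
  simp [sh, FreeGroup.of, FreeGroup.map.mk]

lemma mulAut_ext {φ ψ : MulAut F} (h : ∀ i, φ (of i) = ψ (of i)) : φ = ψ := by
  have : φ.toMonoidHom = ψ.toMonoidHom := FreeGroup.ext_hom _ _ h
  ext x
  exact congrArg (fun (f : F →* F) => f x) this

def sigFun : ℕ → F
  | 0 => of 0 * of 1 * (of 0)⁻¹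
  | 1 => of 0
  | (n+2) => of (n+2)

def sigInvFun : ℕ → F
  | 0 => of 1
  | 1 => (of 1)⁻¹ * of 0 * of 1
  | (n+2) => of (n+2)

lemma sig_inv_comp : (lift sigInvFun).comp (lift sigFun) = MonoidHom.id F := by
  apply FreeGroup.ext_hom
  intro a
  match a with
  | 0 => simp [sigFun, sigInvFun]; group
  | 1 => simp [sigFun, sigInvFun]
  | (n+2) => simp [sigFun, sigInvFun]

lemma sig_comp_inv : (lift sigFun).comp (lift sigInvFun) = MonoidHom.id F := by
  apply FreeGroup.ext_hom
  intro a
  match a with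
  | 0 => simp [sigFun, sigInvFun]
  | 1 => simp [sigFun, sigInvFun]; group
  | (n+2) => simp [sigFun, sigInvFun]

def σA : MulAut F :=
  { toFun := lift sigFun
    invFun := lift sigInvFun
    left_inv := fun x => congrArg (fun (f : F →* F) => f x) sig_inv_comp
    right_inv := fun x => congrArg (fun (f : F →* F) => f x) sig_comp_inv
    map_mul' := map_mul _ }

@[simp] lemma σA_of0 : σA (of 0) = of 0 * of 1 * (of 0)⁻¹ := by simp [σA, sigFun]
@[simp] lemma σA_of1 : σA (of 1) = of 0 := by simp [σA, sigFun]
@[simp] lemma σA_of2 (n : ℕ) : σA (of (n+2)) = of (n+2) := by simp [σA]; rfl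

def SEndFun (e : MulAut F) : ℕ → F
  | 0 => of 0
  | (i+1) => sh (e (of i))

def SEnd (e : MulAut F) : F →* F := lift (SEndFun e)

@[simp] lemma SEnd_of0 (e : MulAut F) : SEnd e (of 0) = of 0 := by simp [SEnd, SEndFun]
@[simp] lemma SEnd_ofs (e : MulAut F) (i : ℕ) : SEnd e (of (i+1)) = sh (e (of i)) := by
  simp [SEnd, SEndFun]

lemma SEnd_comp_sh (e : MulAut F) : (SEnd e).comp sh = sh.comp e.toMonoidHom := by
  apply FreeGroup.ext_hom; intro a; simp

lemma SEnd_sh (e : MulAut F) (x : F) : SEnd e (sh x) = sh (e x) :=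
  congrArg (fun (f : F →* F) => f x) (SEnd_comp_sh e)

lemma SEnd_comp (e f : MulAut F) : (SEnd e).comp (SEnd f) = SEnd (e * f) := by
  apply FreeGroup.ext_hom; intro a
  match a with
  | 0 => simp
  | (i+1) => simp [SEnd_sh]

lemma SEnd_apply_SEnd (e f : MulAut F) (x : F) : SEnd e (SEnd f x) = SEnd (e * f) x :=
  congrArg (fun (g : F →* F) => g x) (SEnd_comp e f)

lemma SEnd_one : SEnd 1 = MonoidHom.id F := by
  apply FreeGroup.ext_hom; intro a
  match a with
  | 0 => simp
  | (i+1) => simp [MulAut.one_apply]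

def SA : MulAut F →* MulAut F :=
  { toFun := fun e =>
      { toFun := SEnd e
        invFun := SEnd e⁻¹
        left_inv := fun x => by
          rw [SEnd_apply_SEnd, inv_mul_cancel, SEnd_one]; rfl
        right_inv := fun x => by
          rw [SEnd_apply_SEnd, mul_inv_cancel, SEnd_one]; rfl
        map_mul' := map_mul _ }
    map_one' := by
      apply mulAut_ext; intro i
      exact congrArg (fun (f : F →* F) => f (of i)) SEnd_one
    map_mul' := fun e f => by
      apply mulAut_ext; intro i
      match i with
      | 0 => simp [MulAut.mul_apply]
      | (i+1) => simp [MulAut.mul_apply, SEnd_sh] }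

@[simp] lemma SA_of0 (e : MulAut F) : SA e (of 0) = of 0 := SEnd_of0 e
@[simp] lemma SA_ofs (e : MulAut F) (i : ℕ) : SA e (of (i+1)) = sh (e (of i)) := SEnd_ofs e i
lemma SA_sh (e : MulAut F) (x : F) : SA e (sh x) = sh (e x) := SEnd_sh e x

-- far commutation and braid relation
lemma σA_shsh (u : F) : σA (sh (sh u)) = sh (sh u) := by
  have : σA.toMonoidHom.comp (sh.comp sh) = sh.comp sh := by
    apply FreeGroup.ext_hom; intro a; simp
  exact congrArg (fun (f : F →* F) => f u) this

lemma comm2 (z : MulAut F) : σA * SA (SA z) = SA (SA z) * σA := by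
  apply mulAut_ext; intro i
  match i with
  | 0 => simp [MulAut.mul_apply, _root_.map_mul, _root_.map_inv]
  | 1 => simp [MulAut.mul_apply, SA_sh]
  | (i+2) => simp [MulAut.mul_apply, SA_sh, σA_shsh]

lemma braid : σA * SA σA * σA = SA σA * σA * SA σA := by
  apply mulAut_ext; intro i
  match i with
  | 0 => simp [MulAut.mul_apply, _root_.map_mul, _root_.map_inv, SA_sh]; group
  | 1 => simp [MulAut.mul_apply, _root_.map_mul, _root_.map_inv, SA_sh]
  | 2 =>
      show σA (SA σA (σA (of (0+2)))) = SA σA (σA (SA σA (of (0+2))))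
      simp [MulAut.mul_apply, _root_.map_mul, _root_.map_inv, SA_sh]
  | (i+3) =>
      show σA (SA σA (σA (of (i+1+2)))) = SA σA (σA (SA σA (of (i+1+2))))
      simp [MulAut.mul_apply, _root_.map_mul, _root_.map_inv, SA_sh, σA_shsh]

/-- The LD operation on automorphisms. -/
def opG (a b : MulAut F) : MulAut F := a * SA b * σA * (SA a)⁻¹

section keylemma
variable {G : Type*} [Group G]

lemma key_conj {x q : G} (hq : x * q = q * x) : q⁻¹ * x * q = x := by
  rw [mul_assoc, hq, ← mul_assoc, inv_mul_cancel, one_mul]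

lemma generic_ld {a A B x Y A2 B2 C2 : G}
    (hA : x * A2 = A2 * x) (hB : x * B2 = B2 * x) (hC : x * C2 = C2 * x)
    (hb : x * Y * x = Y * x * Y) :
    (a * B * x * A⁻¹) * (A * C2 * Y * A2⁻¹) * x * (A * B2 * Y * A2⁻¹)⁻¹
      = a * (B * C2 * Y * B2⁻¹) * x * A⁻¹ := by
  have hBinv : x * B2⁻¹ = B2⁻¹ * x := (Commute.inv_right hB : Commute x B2⁻¹)
  calc (a * B * x * A⁻¹) * (A * C2 * Y * A2⁻¹) * x * (A * B2 * Y * A2⁻¹)⁻¹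
      = a * B * (x * C2) * (Y * (A2⁻¹ * x * A2) * Y⁻¹) * B2⁻¹ * A⁻¹ := by group
    _ = a * B * (C2 * x) * (Y * x * Y⁻¹) * B2⁻¹ * A⁻¹ := by rw [hC, key_conj hA]
    _ = a * B * C2 * (x * Y * x) * Y⁻¹ * B2⁻¹ * A⁻¹ := by group
    _ = a * B * C2 * (Y * x * Y) * Y⁻¹ * B2⁻¹ * A⁻¹ := by rw [hb]
    _ = a * B * C2 * Y * (x * B2⁻¹) * A⁻¹ := by group
    _ = a * B * C2 * Y * (B2⁻¹ * x) * A⁻¹ := by rw [hBinv]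
    _ = a * (B * C2 * Y * B2⁻¹) * x * A⁻¹ := by group
end keylemma

lemma opG_ld (a b c : MulAut F) : opG a (opG b c) = opG (opG a b) (opG a c) := by
  unfold opG
  simp only [_root_.map_mul, _root_.map_inv]
  rw [generic_ld (comm2 a) (comm2 b) (comm2 c) braid]

def ev : FreeMagma Unit → MulAut F
  | .of _ => 1
  | .mul u v => opG (ev u) (ev v)

lemma ev_mul (u v : FreeMagma Unit) : ev (u * v) = opG (ev u) (ev v) := rfl

lemma ev_ld {a b : FreeMagma Unit} (h : LDRel a b) : ev a = ev b := by
  induction h with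
  | ld a b c => rw [ev_mul, ev_mul, ev_mul, ev_mul, ev_mul, opG_ld]
  | refl a => rfl
  | symm _ ih => exact ih.symm
  | trans _ _ ih1 ih2 => exact ih1.trans ih2
  | mul_congr _ _ ih1 ih2 => rw [ev_mul, ev_mul, ih1, ih2]

def evQ : FreeLD → MulAut F := Quot.lift ev (fun _ _ h => ev_ld h)

lemma evQ_mul (u v : FreeLD) : evQ (FreeLD.mul u v) = opG (evQ u) (evQ v) := by
  induction u using Quot.ind
  induction v using Quot.ind
  rfl

lemma evQ_foldl (l : List FreeLD) (a : FreeLD) :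
    evQ (l.foldl FreeLD.mul a) = (l.map evQ).foldl opG (evQ a) := by
  induction l generalizing a with
  | nil => rfl
  | cons c cs ih => simp only [List.foldl_cons, List.map_cons, ih, evQ_mul]

/-- σ-positive products -/
inductive SP : MulAut F → Prop
  | base (e f : MulAut F) : SP (SA e * σA * SA f)
  | step (e : MulAut F) {γ : MulAut F} (h : SP γ) : SP (SA e * σA * γ)

lemma SP.cons {γ : MulAut F} (h : SP γ) (a b : MulAut F) : SP (SA a * σA * SA b * γ) := by
  induction h with
  | base e f =>
      have : SA a * σA * SA b * (SA e * σA * SA f) = SA a * σA * (SA (b * e) * σA * SA f) := by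
        rw [_root_.map_mul]; group
      rw [this]; exact SP.step a (SP.base (b*e) f)
  | step e h ih =>
      rename_i γ'
      have : SA a * σA * SA b * (SA e * σA * γ') = SA a * σA * (SA (b * e) * σA * γ') := by
        rw [_root_.map_mul]; group
      rw [this]; exact SP.step a (SP.step (b*e) h)

lemma sp_of_foldl (g c : MulAut F) (cs : List (MulAut F)) :
    SP (g⁻¹ * List.foldl opG (opG g c) cs) := by
  induction cs generalizing g c with
  | nil =>
      have : g⁻¹ * List.foldl opG (opG g c) [] = SA c * σA * SA g⁻¹ := by
        simp only [List.foldl_nil, opG, _root_.map_inv]; group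
      rw [this]; exact SP.base c g⁻¹
  | cons c' cs ih =>
      have h1 := ih (opG g c) c'
      have : g⁻¹ * List.foldl opG (opG g c) (c' :: cs)
          = SA c * σA * SA g⁻¹ * ((opG g c)⁻¹ * List.foldl opG (opG (opG g c) c') cs) := by
        simp only [List.foldl_cons, opG, _root_.map_inv]; group
      rw [this]; exact SP.cons h1 c g⁻¹


/-! ### Word-level machinery -/

abbrev Wd := List (ℕ × Bool)

def IsRed (m : Wd) : Prop := List.Chain' (fun a b => ¬(b.1 = a.1 ∧ b.2 = !a.2)) m

lemma isRed_nil : IsRed [] := List.isChain_nil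

lemma isRed_singleton (p : ℕ × Bool) : IsRed [p] := List.isChain_singleton p

lemma IsRed.prefix {m₁ m₂ : Wd} (h : IsRed (m₁ ++ m₂)) : IsRed m₁ :=
  (List.isChain_append.mp h).1

lemma IsRed.suffix {m₁ m₂ : Wd} (h : IsRed (m₁ ++ m₂)) : IsRed m₂ :=
  (List.isChain_append.mp h).2.1

lemma reduce_eq_self {m : Wd} (h : IsRed m) : reduce m = m := by
  induction m with
  | nil => rfl
  | cons x m ih =>
    have hm : IsRed m := h.tail
    rw [reduce.cons, ih hm]
    cases m with
    | nil => rfl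
    | cons y m' =>
      have hxy : ¬(y.1 = x.1 ∧ y.2 = !x.2) := (List.isChain_cons_cons.mp h).1
      show (if x.1 = y.1 ∧ x.2 = !y.2 then m' else x :: y :: m') = x :: y :: m'
      rw [if_neg]
      rintro ⟨h1, h2⟩
      exact hxy ⟨h1.symm, by rw [h2]; simp⟩

lemma isRed_of_reduce_eq {m : Wd} (h : reduce m = m) : IsRed m := by
  induction m with
  | nil => exact isRed_nil
  | cons x m ih =>
    rw [reduce.cons] at h
    rcases hr : reduce m with _ | ⟨y, m'⟩ <;> rw [hr] at h
    · have : m = [] := by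
        have := (List.cons.injEq x [] x m).mp h
        exact this.2.symm
      subst this; exact isRed_singleton x
    · by_cases hc : x.1 = y.1 ∧ x.2 = !y.2
      · exfalso
        have h' : m' = x :: m := by simpa [hc] using h
        have hle : (y :: m').length ≤ m.length := hr ▸ (reduce.red (L := m)).length_le
        rw [h'] at hle
        simp at hle
      · have h' : x :: y :: m' = x :: m := by simpa [hc] using h
        have hm : m = y :: m' := ((List.cons.injEq ..).mp h').2.symm
        have hred : reduce m = m := by rw [hr, hm]
        rw [hm]
        refine List.isChain_cons_cons.mpr ⟨?_, hm ▸ ih hred⟩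
        rintro ⟨h1, h2⟩
        exact hc ⟨h1.symm, by rw [h2]; simp⟩

lemma toWord_isRed (g : F) : IsRed g.toWord := isRed_of_reduce_eq (reduce_toWord g)

lemma eq_of_mk_eq {m m' : Wd} (h : IsRed m) (h' : IsRed m') (e : mk m = mk m') : m = m' := by
  have := reduce.sound e
  rwa [reduce_eq_self h, reduce_eq_self h'] at this

lemma mk_cancel (L M : Wd) (x : ℕ) (b : Bool) :
    mk (L ++ (x, b) :: (x, !b) :: M) = mk (L ++ M) :=
  Quot.sound Red.Step.not

lemma isRed_map {f : ℕ → ℕ} (hf : Function.Injective f) {m : Wd} (h : IsRed m) :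
    IsRed (m.map (fun p => (f p.1, p.2))) := by
  rw [IsRed, List.Chain', List.isChain_map]
  exact List.IsChain.imp (fun a b hab hc => hab ⟨hf hc.1, hc.2⟩) h

lemma of_eq_mk (i : ℕ) : of i = mk [(i, true)] := rfl

lemma inv_of_eq_mk (i : ℕ) : (of i)⁻¹ = mk [(i, false)] := by
  rw [of_eq_mk, inv_mk]; rfl

/-! ### The partial conjugation χ and the swap ρ, with σ = χ ∘ ρ -/

def chiFun : ℕ → F
  | 0 => of 0
  | 1 => of 0 * of 1 * (of 0)⁻¹
  | (n+2) => of (n+2)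

def chiInvFun : ℕ → F
  | 0 => of 0
  | 1 => (of 0)⁻¹ * of 1 * of 0
  | (n+2) => of (n+2)

lemma chi_inv_comp : (lift chiInvFun).comp (lift chiFun) = MonoidHom.id F := by
  apply FreeGroup.ext_hom; intro a
  match a with
  | 0 => simp [chiFun, chiInvFun]
  | 1 => simp [chiFun, chiInvFun]; group
  | (n+2) => simp [chiFun, chiInvFun]

lemma chi_comp_inv : (lift chiFun).comp (lift chiInvFun) = MonoidHom.id F := by
  apply FreeGroup.ext_hom; intro a
  match a with
  | 0 => simp [chiFun, chiInvFun]
  | 1 => simp [chiFun, chiInvFun]; group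
  | (n+2) => simp [chiFun, chiInvFun]

def χA : MulAut F :=
  { toFun := lift chiFun
    invFun := lift chiInvFun
    left_inv := fun x => congrArg (fun (f : F →* F) => f x) chi_inv_comp
    right_inv := fun x => congrArg (fun (f : F →* F) => f x) chi_comp_inv
    map_mul' := _root_.map_mul _ }

@[simp] lemma χA_of0 : χA (of 0) = of 0 := by simp [χA, chiFun]
@[simp] lemma χA_of1 : χA (of 1) = of 0 * of 1 * (of 0)⁻¹ := by simp [χA, chiFun]
@[simp] lemma χA_of2 (n : ℕ) : χA (of (n+2)) = of (n+2) := by simp [χA]; rfl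

def ρA : MulAut F := FreeGroup.freeGroupCongr (Equiv.swap 0 1)

lemma ρA_mk (m : Wd) : ρA (mk m) = mk (m.map (fun p => (Equiv.swap 0 1 p.1, p.2))) :=
  FreeGroup.map.mk

lemma sigma_eq_chi_rho : ∀ x : F, σA x = χA (ρA x) := by
  have : σA = χA * ρA := by
    apply mulAut_ext; intro i
    match i with
    | 0 => simp [MulAut.mul_apply, ρA]
    | 1 => simp [MulAut.mul_apply, ρA]
    | (n+2) =>
        simp [MulAut.mul_apply, ρA, Equiv.swap_apply_of_ne_of_ne (by omega : (n:ℕ)+2 ≠ 0)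
          (by omega : (n:ℕ)+2 ≠ 1)]
  intro x; rw [this]; rfl

def chiImg : ℕ × Bool → Wd
  | (1, s) => [(0, true), (1, s), (0, false)]
  | p => [p]

lemma chi_letter (p : ℕ × Bool) : χA (mk [p]) = mk (chiImg p) := by
  rcases p with ⟨j, b⟩
  match j, b with
  | 0, true => rw [← of_eq_mk, χA_of0]; rfl
  | 0, false => rw [← inv_of_eq_mk, _root_.map_inv, χA_of0, inv_of_eq_mk]; rfl
  | 1, true =>
      rw [← of_eq_mk, χA_of1, inv_of_eq_mk 0, of_eq_mk 0, of_eq_mk 1, mul_mk, mul_mk]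
      rfl
  | 1, false =>
      rw [← inv_of_eq_mk, _root_.map_inv, χA_of1]
      have : (of 0 * of 1 * (of 0)⁻¹)⁻¹ = of 0 * (of 1)⁻¹ * (of 0)⁻¹ := by group
      rw [this, inv_of_eq_mk 1, inv_of_eq_mk 0, of_eq_mk 0, mul_mk, mul_mk]
      rfl
  | (n+2), true => rw [← of_eq_mk, χA_of2]; rfl
  | (n+2), false => rw [← inv_of_eq_mk, _root_.map_inv, χA_of2, inv_of_eq_mk]; rfl

/-! ### The main χ tail lemma -/

lemma isRed_glue {X Y : Wd} {a : ℕ × Bool} (h1 : IsRed (X ++ [a])) (h2 : IsRed (a :: Y)) :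
    IsRed (X ++ a :: Y) := by
  rw [IsRed, List.Chain', List.isChain_append]
  refine ⟨h1.prefix, h2, ?_⟩
  intro x hx y hy
  have h3 := (List.isChain_append.mp h1).2.2 x hx
  simp only [List.head?_cons, Option.mem_def, Option.some.injEq] at hy
  subst hy
  exact h3 a rfl

lemma isRed_snoc {X : Wd} {a b : ℕ × Bool} (h : IsRed (X ++ [a]))
    (hab : ¬(b.1 = a.1 ∧ b.2 = !a.2)) : IsRed (X ++ [a, b]) :=
  isRed_glue h (List.isChain_cons_cons.mpr ⟨hab, isRed_singleton b⟩)

lemma isRed_snoc3 {X : Wd} {a : ℕ × Bool} (h : IsRed (X ++ [a]))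
    (ha : ¬((0:ℕ) = a.1 ∧ true = !a.2)) (u : Bool) :
    IsRed (X ++ [a, (0, true), (1, u), (0, false)]) := by
  refine isRed_glue h ?_
  refine List.isChain_cons_cons.mpr ⟨ha, ?_⟩
  refine List.isChain_cons_cons.mpr ⟨by simp, ?_⟩
  refine List.isChain_cons_cons.mpr ⟨by simp, isRed_singleton _⟩

lemma lastpair {l : Wd} {q p : ℕ × Bool} (h : IsRed (l ++ [q, p])) :
    ¬(p.1 = q.1 ∧ p.2 = !q.2) :=
  (List.isChain_cons_cons.mp (h.suffix (m₁ := l))).1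

lemma mk_cancel01 (A B : Wd) : mk (A ++ (0, false) :: (0, true) :: B) = mk (A ++ B) := by
  have := mk_cancel A B 0 false
  simpa using this

def chiTail : ℕ × Bool → Wd → Prop
  | (0, true), m' => (∃ X, m' = X ++ [(0, true)]) ∨ (∃ X s, m' = X ++ [(1, s)])
  | (0, false), m' => m' = [(0, false)] ∨
      ∃ X r, m' = X ++ [r, (0, false)] ∧ (2 ≤ r.1 ∨ r = (0, false))
  | (1, s), m' => ∃ X, m' = X ++ [(1, s), (0, false)]
  | (j+2, s), m' => ∃ X, m' = X ++ [(j+2, s)]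

lemma chi_main : ∀ (m₀ : Wd) (p : ℕ × Bool), IsRed (m₀ ++ [p]) →
    ∃ m', IsRed m' ∧ χA (mk (m₀ ++ [p])) = mk m' ∧ chiTail p m' := by
  intro m₀
  induction m₀ using List.reverseRecOn with
  | nil =>
    intro p _
    refine ⟨chiImg p, ?_, by simpa using chi_letter p, ?_⟩
    · rcases p with ⟨pj, pb⟩
      match pj, pb with
      | 0, pb => exact isRed_singleton _
      | 1, pb => simp [chiImg, IsRed, List.Chain']
      | (j+2), pb => exact isRed_singleton _
    · rcases p with ⟨pj, pb⟩
      match pj, pb with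
      | 0, true => exact Or.inl ⟨[], rfl⟩
      | 0, false => exact Or.inl rfl
      | 1, pb => exact ⟨[(0, true)], rfl⟩
      | (j+2), pb => exact ⟨[], rfl⟩
  | append_singleton l q ih =>
    intro p hred
    obtain ⟨m₀', hm₀red, hm₀eq, htail⟩ := ih q hred.prefix
    have hqp : ¬(p.1 = q.1 ∧ p.2 = !q.2) := lastpair (by simpa using hred)
    have hsplit : χA (mk (l ++ [q] ++ [p])) = mk (m₀' ++ chiImg p) := by
      rw [← mul_mk, _root_.map_mul, hm₀eq, chi_letter, mul_mk]
    rw [hsplit]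
    clear hsplit hm₀eq hred ih
    rcases q with ⟨qj, qb⟩
    rcases p with ⟨pj, pb⟩
    match qj, qb with
    | 1, s =>
      -- htail : ∃ X, m₀' = X ++ [(1,s),(0,false)]
      obtain ⟨X, rfl⟩ := htail
      have hX : IsRed (X ++ [(1, s)]) := by
        have : X ++ [(1,s),(0,false)] = (X ++ [(1,s)]) ++ [(0,false)] := by simp
        exact (this ▸ hm₀red).prefix
      match pj, pb with
      | 0, true =>
        refine ⟨X ++ [(1, s)], hX, ?_, Or.inr ⟨X, s, rfl⟩⟩
        have : X ++ [(1,s),(0,false)] ++ chiImg (0,true)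
            = (X ++ [(1,s)]) ++ (0,false) :: (0,true) :: [] := by simp [chiImg]
        rw [this, mk_cancel01]; simp
      | 0, false =>
        refine ⟨X ++ [(1,s),(0,false),(0,false)], ?_, by simp [chiImg], ?_⟩
        · have h1 : IsRed ((X ++ [(1,s)]) ++ [(0,false),(0,false)]) :=
            isRed_snoc (by simpa using hm₀red) (by simp)
          simpa using h1
        · exact Or.inr ⟨X ++ [(1,s)], (0,false), by simp, Or.inr rfl⟩
      | 1, u =>
        have hus : u = s := by
          rcases u <;> rcases s <;> simp_all
        subst hus
        refine ⟨X ++ [(1,u),(1,u),(0,false)], ?_, ?_, ⟨X ++ [(1,u)], by simp⟩⟩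
        · exact isRed_glue (Y := [(1,u),(0,false)]) hX (by simp [IsRed, List.Chain'])
        · have : X ++ [(1,u),(0,false)] ++ chiImg (1,u)
              = (X ++ [(1,u)]) ++ (0,false) :: (0,true) :: [(1,u),(0,false)] := by simp [chiImg]
          rw [this, mk_cancel01]; simp
      | (j+2), t =>
        refine ⟨X ++ [(1,s),(0,false),(j+2,t)], ?_, by simp [chiImg], ⟨X ++ [(1,s),(0,false)], by simp⟩⟩
        have : X ++ [(1,s),(0,false),(j+2,t)] = (X ++ [(1,s)]) ++ [(0,false),(j+2,t)] := by simp
        rw [this]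
        exact isRed_snoc (X := X ++ [(1,s)]) (by simpa using hm₀red) (by simp)
    | 0, false =>
      -- p ≠ (0,true)
      rcases htail with rfl | ⟨X, r, rfl, hr⟩
      · -- m₀' = [(0,false)]
        match pj, pb with
        | 0, true => exact absurd ⟨rfl, rfl⟩ hqp
        | 0, false =>
          exact ⟨[(0,false),(0,false)], by simp [IsRed, List.Chain'], by simp [chiImg],
            Or.inr ⟨[], (0,false), rfl, Or.inr rfl⟩⟩
        | 1, u =>
          refine ⟨[(1,u),(0,false)], by simp [IsRed, List.Chain'], ?_, ⟨[], rfl⟩⟩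
          have : [(0,false)] ++ chiImg (1,u) = [] ++ (0,false) :: (0,true) :: [(1,u),(0,false)] := by
            simp [chiImg]
          rw [this, mk_cancel01]; simp
        | (j+2), t =>
          exact ⟨[(0,false),(j+2,t)], by simp [IsRed, List.Chain'], by simp [chiImg], ⟨[(0,false)], rfl⟩⟩
      · -- m₀' = X ++ [r,(0,false)], 2 ≤ r.1 ∨ r = (0,false)
        have hXr : IsRed (X ++ [r]) := by
          have : X ++ [r,(0,false)] = (X ++ [r]) ++ [(0,false)] := by simp
          exact (this ▸ hm₀red).prefix
        match pj, pb with
        | 0, true => exact absurd ⟨rfl, rfl⟩ hqp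
        | 0, false =>
          refine ⟨X ++ [r,(0,false),(0,false)], ?_, by simp [chiImg],
            Or.inr ⟨X ++ [r], (0,false), by simp, Or.inr rfl⟩⟩
          have h1 : IsRed ((X ++ [r]) ++ [(0,false),(0,false)]) :=
            isRed_snoc (by simpa using hm₀red) (by simp)
          simpa using h1
        | 1, u =>
          refine ⟨X ++ [r,(1,u),(0,false)], ?_, ?_, ⟨X ++ [r], by simp⟩⟩
          · refine isRed_glue (Y := [(1,u),(0,false)]) hXr ?_
            refine List.isChain_cons_cons.mpr ⟨?_, by simp [IsRed, List.Chain']⟩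
            rcases hr with h2 | rfl
            · rintro ⟨h, -⟩; omega
            · rintro ⟨h, -⟩; simp at h
          · have : X ++ [r,(0,false)] ++ chiImg (1,u)
                = (X ++ [r]) ++ (0,false) :: (0,true) :: [(1,u),(0,false)] := by simp [chiImg]
            rw [this, mk_cancel01]; simp
        | (j+2), t =>
          refine ⟨X ++ [r,(0,false),(j+2,t)], ?_, by simp [chiImg], ⟨X ++ [r,(0,false)], by simp⟩⟩
          have h1 : IsRed ((X ++ [r]) ++ [(0,false),(j+2,t)]) :=
            isRed_snoc (by simpa using hm₀red) (by simp)
          simpa using h1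
    | 0, true =>
      -- p ≠ (0,false); m₀' ends (0,true) or (1,t)
      have hcases : (∃ X, m₀' = X ++ [(0,true)]) ∨ (∃ X t, m₀' = X ++ [(1,t)]) := htail
      have hnc : ∀ (X : Wd) (a : ℕ × Bool), m₀' = X ++ [a] → (a = (0,true) ∨ a.1 = 1) →
          True := fun _ _ _ _ => trivial
      rcases hcases with ⟨X, rfl⟩ | ⟨X, t, rfl⟩
      · match pj, pb with
        | 0, true =>
          exact ⟨X ++ [(0,true),(0,true)], isRed_snoc hm₀red (by simp), by simp [chiImg],
            Or.inl ⟨X ++ [(0,true)], by simp⟩⟩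
        | 0, false => exact absurd ⟨rfl, rfl⟩ hqp
        | 1, u =>
          exact ⟨X ++ [(0,true),(0,true),(1,u),(0,false)],
            isRed_snoc3 hm₀red (by simp) u, by simp [chiImg], ⟨X ++ [(0,true),(0,true)], by simp⟩⟩
        | (j+2), u =>
          exact ⟨X ++ [(0,true),(j+2,u)], isRed_snoc hm₀red (by simp), by simp [chiImg],
            ⟨X ++ [(0,true)], by simp⟩⟩
      · match pj, pb with
        | 0, true =>
          exact ⟨X ++ [(1,t),(0,true)], isRed_snoc hm₀red (by simp), by simp [chiImg],
            Or.inl ⟨X ++ [(1,t)], by simp⟩⟩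
        | 0, false => exact absurd ⟨rfl, rfl⟩ hqp
        | 1, u =>
          exact ⟨X ++ [(1,t),(0,true),(1,u),(0,false)],
            isRed_snoc3 hm₀red (by simp) u, by simp [chiImg], ⟨X ++ [(1,t),(0,true)], by simp⟩⟩
        | (j+2), u =>
          exact ⟨X ++ [(1,t),(j+2,u)], isRed_snoc hm₀red (by simp), by simp [chiImg],
            ⟨X ++ [(1,t)], by simp⟩⟩
    | (k+2), s =>
      obtain ⟨X, rfl⟩ := htail
      match pj, pb with
      | 0, true =>
        exact ⟨X ++ [(k+2,s),(0,true)], isRed_snoc hm₀red (by simp), by simp [chiImg],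
          Or.inl ⟨X ++ [(k+2,s)], by simp⟩⟩
      | 0, false =>
        exact ⟨X ++ [(k+2,s),(0,false)], isRed_snoc hm₀red (by simp), by simp [chiImg],
          Or.inr ⟨X, (k+2,s), by simp, Or.inl (by simp)⟩⟩
      | 1, u =>
        exact ⟨X ++ [(k+2,s),(0,true),(1,u),(0,false)],
          isRed_snoc3 hm₀red (by simp) u, by simp [chiImg], ⟨X ++ [(k+2,s),(0,true)], by simp⟩⟩
      | (j+2), u =>
        refine ⟨X ++ [(k+2,s),(j+2,u)], ?_, by simp [chiImg], ⟨X ++ [(k+2,s)], by simp⟩⟩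
        refine isRed_snoc hm₀red ?_
        rintro ⟨h1, h2⟩
        exact hqp ⟨h1, h2⟩

/-! ### σ preserves "ends with x₀⁻¹" -/

lemma sigma_word {m₀ : Wd} (h : IsRed (m₀ ++ [(0, false)])) :
    ∃ m' X, IsRed m' ∧ σA (mk (m₀ ++ [(0, false)])) = mk m' ∧ m' = X ++ [(1, false), (0, false)] := by
  have hswap : ρA (mk (m₀ ++ [(0, false)]))
      = mk ((m₀.map (fun p => (Equiv.swap 0 1 p.1, p.2))) ++ [(1, false)]) := by
    rw [ρA_mk]
    simp [Equiv.swap_apply_left]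
  have hred' : IsRed ((m₀.map (fun p => (Equiv.swap 0 1 p.1, p.2))) ++ [(1, false)]) := by
    have := isRed_map (f := Equiv.swap 0 1) (Equiv.injective _) h
    simpa [Equiv.swap_apply_left] using this
  obtain ⟨m', hred, heq, X, hX⟩ := chi_main _ (1, false) hred'
  refine ⟨m', X, hred, ?_, hX⟩
  rw [sigma_eq_chi_rho, hswap, heq]

/-! ### S e preserves tail kind -/

def tailKind (m m' : Wd) : Prop :=
  (m = [] ∧ m' = []) ∨
  (∃ X X' s, m = X ++ [(0, s)] ∧ m' = X' ++ [(0, s)]) ∨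
  (∃ X X' a a', m = X ++ [a] ∧ m' = X' ++ [a'] ∧ a.1 ≠ 0 ∧ a'.1 ≠ 0)

lemma snoc_last {X Y : Wd} {a b : ℕ × Bool} (h : X ++ [a] = Y ++ [b]) : a = b := by
  have h1 : (X ++ [a]).getLast? = some a := by simp
  have h2 : (Y ++ [b]).getLast? = some b := by simp
  rw [h, h2] at h1
  exact (Option.some.injEq .. ▸ h1.symm)

lemma split_block {m X : Wd} {a : ℕ × Bool} (hm : m = X ++ [a]) (ha : a.1 ≠ 0) :
    ∃ m₀ B, m = m₀ ++ B ∧ B ≠ [] ∧ (∀ p ∈ B, p.1 ≠ 0) ∧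
      (m₀ = [] ∨ ∃ Y s, m₀ = Y ++ [(0, s)]) ∧ m₀.length < m.length := by
  classical
  set pr : ℕ × Bool → Bool := fun p => p.1 != 0 with hpr
  have h0 : (List.takeWhile pr m.reverse ++ List.dropWhile pr m.reverse).reverse = m := by
    rw [List.takeWhile_append_dropWhile, List.reverse_reverse]
  have hrev : m.reverse = a :: X.reverse := by rw [hm]; simp
  have htne : (List.takeWhile pr m.reverse).length ≠ 0 := by
    rw [hrev, List.takeWhile_cons_of_pos (by simpa [hpr] using ha)]
    simp
  have hlensum : (List.takeWhile pr m.reverse).length + (List.dropWhile pr m.reverse).length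
      = m.length := by
    have := congrArg List.length h0
    simp only [List.length_reverse, List.length_append] at this
    exact this
  refine ⟨(m.reverse.dropWhile pr).reverse, (m.reverse.takeWhile pr).reverse, ?_, ?_, ?_, ?_, ?_⟩
  · conv_lhs => rw [← h0]
    rw [List.reverse_append]
  · intro hc
    apply htne
    rw [← List.length_reverse (as := List.takeWhile pr m.reverse), hc]
    rfl
  · intro p hp
    have := List.mem_takeWhile_imp (List.mem_reverse.mp hp)
    simpa [hpr] using this
  · rcases hD : m.reverse.dropWhile pr with _ | ⟨d, D'⟩
    · left; simp [hD]
    · right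
      have hd : ¬ (pr d = true) := by
        have := List.head?_dropWhile_not pr m.reverse
        rw [hD] at this
        simpa using this
      have hd0 : d.1 = 0 := by simpa [hpr] using hd
      refine ⟨D'.reverse, d.2, ?_⟩
      simp [← hd0]
  · rw [List.length_reverse]
    omega

lemma sh_mk (w : Wd) : sh (mk w) = mk (w.map (fun p => (p.1 + 1, p.2))) := FreeGroup.map.mk

lemma SA_letter0 (e : MulAut F) (s : Bool) : SA e (mk [(0, s)]) = mk [(0, s)] := by
  cases s
  · rw [← inv_of_eq_mk, _root_.map_inv, SA_of0, inv_of_eq_mk]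
  · rw [← of_eq_mk, SA_of0, of_eq_mk]

lemma SA_word (e : MulAut F) : ∀ (n : ℕ) (m : Wd), m.length ≤ n → IsRed m →
    ∃ m', IsRed m' ∧ SA e (mk m) = mk m' ∧ tailKind m m' := by
  intro n
  induction n with
  | zero =>
    intro m hlen _
    have : m = [] := List.eq_nil_of_length_eq_zero (Nat.le_zero.mp hlen)
    subst this
    exact ⟨[], isRed_nil, by rw [show (mk [] : F) = 1 from rfl, _root_.map_one], Or.inl ⟨rfl, rfl⟩⟩
  | succ n ih =>
    intro m hlen hred
    rcases List.eq_nil_or_concat m with rfl | ⟨X, a, hm⟩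
    · exact ⟨[], isRed_nil, by rw [show (mk [] : F) = 1 from rfl, _root_.map_one], Or.inl ⟨rfl, rfl⟩⟩
    rw [List.concat_eq_append] at hm
    subst hm
    by_cases ha : a.1 = 0
    · -- last letter has generator 0
      obtain ⟨a1, s⟩ := a
      simp only at ha
      subst ha
      obtain ⟨X', hX'red, hX'eq, htk⟩ := ih X (by simp at hlen; omega) hred.prefix
      have heq : SA e (mk (X ++ [(0, s)])) = mk (X' ++ [(0, s)]) := by
        rw [← mul_mk, _root_.map_mul, hX'eq, SA_letter0, mul_mk]
      rcases htk with ⟨hX0, hX'0⟩ | ⟨Y, Y', t, hY, hY'⟩ | ⟨Y, Y', b, b', hY, hY', hb, hb'⟩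
      · subst hX0; subst hX'0
        exact ⟨[(0, s)], isRed_singleton _, heq, Or.inr (Or.inl ⟨[], [], s, rfl, rfl⟩)⟩
      · subst hY; subst hY'
        have hcond : ¬((0, s).1 = (0, t).1 ∧ (0, s).2 = !(0, t).2) := lastpair (by simpa using hred)
        refine ⟨(Y' ++ [(0, t)]) ++ [(0, s)],
          (by simpa using isRed_snoc (X := Y') (a := (0,t)) (b := (0,s)) hX'red (by simpa using hcond)),
          by simpa using heq, Or.inr (Or.inl ⟨Y ++ [(0, t)], Y' ++ [(0, t)], s, by simp, by simp⟩)⟩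
      · subst hY; subst hY'
        refine ⟨(Y' ++ [b']) ++ [(0, s)],
          (by simpa using isRed_snoc (X := Y') (a := b') (b := (0,s)) hX'red (by rintro ⟨h1, -⟩; exact hb' h1.symm)),
          by simpa using heq, Or.inr (Or.inl ⟨Y ++ [b], Y' ++ [b'], s, by simp, by simp⟩)⟩
    · -- last letter is a b-letter : split off the maximal b-block
      obtain ⟨m₀, B, hmeq, hBne, hBgen, hm₀shape, hm₀len⟩ := split_block (rfl : X ++ [a] = X ++ [a]) ha
      rw [hmeq] at hred hlen ⊢
      rw [hmeq] at hm₀len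
      obtain ⟨m₀', hm₀'red, hm₀'eq, htk⟩ := ih m₀ (by simp at hlen hm₀len ⊢; omega) hred.prefix
      set z : F := mk (B.map (fun p => (p.1 - 1, p.2))) with hz
      have hmkB : mk B = sh z := by
        rw [hz, sh_mk, List.map_map]
        conv_lhs => rw [← List.map_id B]
        congr 1
        refine List.map_congr_left ?_
        intro p hp
        have hp1 := hBgen p hp
        rcases p with ⟨pj, pb⟩
        simp only [Function.comp, id]
        simp only at hp1
        congr 1
        omega
      have hzne : z ≠ 1 := by
        intro h0
        have hB1 : mk B = (1 : F) := by rw [hmkB, h0, _root_.map_one]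
        have : B = [] := eq_of_mk_eq hred.suffix isRed_nil hB1
        exact hBne this
      set q := (e z).toWord with hq
      have hqred : IsRed q := toWord_isRed _
      have hqne : q ≠ [] := by
        rw [hq]
        intro h0
        exact hzne (e.injective (by rw [toWord_eq_nil_iff.mp h0, _root_.map_one]))
      have hSAB : SA e (mk B) = mk (q.map fun p => (p.1 + 1, p.2)) := by
        rw [hmkB, SA_sh, ← mk_toWord (x := e z), ← hq, sh_mk]
      set B' := q.map (fun p => (p.1 + 1, p.2)) with hB'
      have hB'red : IsRed B' := isRed_map (fun _ _ h => Nat.succ_injective h) hqred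
      have hB'ne : B' ≠ [] := by simp [hB', hqne]
      have hB'gen : ∀ p ∈ B', p.1 ≠ 0 := by
        intro p hp
        rw [hB'] at hp
        obtain ⟨r, _, rfl⟩ := List.mem_map.mp hp
        simp
      have heq : SA e (mk (m₀ ++ B)) = mk (m₀' ++ B') := by
        rw [← mul_mk, _root_.map_mul, hm₀'eq, hSAB, mul_mk]
      have hm'red : IsRed (m₀' ++ B') := by
        rw [IsRed, List.Chain', List.isChain_append]
        refine ⟨hm₀'red, hB'red, ?_⟩
        intro x hx y hy
        have hy1 : y.1 ≠ 0 := hB'gen y (List.mem_of_mem_head? hy)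
        rcases htk with ⟨h1, h2⟩ | ⟨Y, Y', t, hY, hY'⟩ | ⟨Y, Y', b, b', hY, hY', hb, _⟩
        · subst h2; simp at hx
        · subst hY'
          have hxe : x = (0, t) := by
            have h5 : (Y' ++ [(0, t)]).getLast? = some (0, t) := by simp
            rw [h5] at hx
            exact (Option.mem_some_iff.mp hx).symm
          subst hxe
          rintro ⟨hc, -⟩
          exact hy1 (by simpa using hc)
        · rcases hm₀shape with rfl | ⟨Z, u, hZ⟩
          · simp at hY
          · have : b = (0, u) := snoc_last (hY.symm.trans hZ)
            rw [this] at hb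
            simp at hb
      obtain ⟨B'', a', hB''⟩ := List.eq_nil_or_concat B' |>.resolve_left hB'ne
      rw [List.concat_eq_append] at hB''
      refine ⟨m₀' ++ B', hm'red, heq,
        Or.inr (Or.inr ⟨m₀ ++ B.dropLast, m₀' ++ B'', B.getLast hBne, a', ?_, ?_, ?_, ?_⟩)⟩
      · rw [List.append_assoc, List.dropLast_append_getLast]
      · rw [hB'', ← List.append_assoc]
      · exact hBgen _ (List.getLast_mem hBne)
      · exact hB'gen a' (by rw [hB'']; simp)

/-! ### Larue's lemma -/

lemma larue_invariant {γ : MulAut F} (h : SP γ) :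
    ∃ Y, IsRed (Y ++ [(0, false)]) ∧ γ (of 0) = mk (Y ++ [(0, false)]) := by
  induction h with
  | base e f =>
    set q := (e (of 0)).toWord with hq
    have hqne : q ≠ [] := by
      rw [hq]; intro h0
      exact of_ne_one 0 (e.injective (by rw [toWord_eq_nil_iff.mp h0, _root_.map_one]))
    set B' := q.map (fun p => (p.1 + 1, p.2)) with hB'
    have hB'red : IsRed B' := isRed_map (fun _ _ h => Nat.succ_injective h) (toWord_isRed _)
    have hB'ne : B' ≠ [] := by simp [hB', hqne]
    have hB'gen : ∀ p ∈ B', p.1 ≠ 0 := by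
      intro p hp
      obtain ⟨r, _, rfl⟩ := List.mem_map.mp (hB' ▸ hp)
      simp
    obtain ⟨B'', b', hB''⟩ := List.eq_nil_or_concat B' |>.resolve_left hB'ne
    rw [List.concat_eq_append] at hB''
    have happ : (SA e * σA * SA f) (of 0) = mk (((0, true) :: B') ++ [(0, false)]) := by
      have h1 : (SA e * σA * SA f) (of 0) = SA e (σA (SA f (of 0))) := rfl
      rw [h1, SA_of0, σA_of0, _root_.map_mul, _root_.map_mul, _root_.map_inv, SA_of0]
      have h2 : SA e (of 1) = sh (e (of 0)) := SA_ofs e 0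
      rw [h2, ← mk_toWord (x := e (of 0)), sh_mk, ← hq, ← hB']
      rw [inv_of_eq_mk, of_eq_mk, mul_mk, mul_mk]
      rfl
    refine ⟨(0, true) :: B', ?_, happ⟩
    · have h3 : IsRed (((0, true) :: B'') ++ [b']) := by
        rw [show ((0,true) :: B'') ++ [b'] = (0,true) :: B' by rw [hB'']; simp]
        refine List.isChain_cons.mpr ⟨?_, hB'red⟩
        intro h hh
        have : h.1 ≠ 0 := hB'gen h (List.mem_of_mem_head? hh)
        rintro ⟨hc, -⟩
        exact this hc
      have h4 : IsRed (((0, true) :: B'') ++ [b', (0, false)]) := by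
        refine isRed_snoc h3 ?_
        rintro ⟨hc, -⟩
        exact hB'gen b' (by rw [hB'']; simp) hc.symm
      rw [hB'']
      simpa using h4
  | step e hγ ih =>
    rename_i γ'
    obtain ⟨Y, hYred, hYeq⟩ := ih
    obtain ⟨m', X, hm'red, hm'eq, hm'form⟩ := sigma_word hYred
    have hm'red' : IsRed m' := hm'red
    obtain ⟨m'', hm''red, hm''eq, htk⟩ := SA_word e m'.length m' le_rfl hm'red'
    have happ : (SA e * σA * γ') (of 0) = mk m'' := by
      have h1 : (SA e * σA * γ') (of 0) = SA e (σA (γ' (of 0))) := rfl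
      rw [h1, hYeq, hm'eq, hm''eq]
    have hm'ne : m' ≠ [] := by rw [hm'form]; simp
    rcases htk with ⟨h1, _⟩ | ⟨Xx, X', s, hm, hm''form⟩ | ⟨Xx, X', a, a', hm, _, ha, _⟩
    · exact absurd h1 hm'ne
    · have hs : (0, s) = ((0 : ℕ), false) := by
        refine snoc_last (X := Xx) (Y := X ++ [(1, false)]) ?_
        rw [← hm, hm'form]; simp
      rw [hs] at hm''form
      exact ⟨X', hm''form ▸ hm''red, happ.trans (by rw [hm''form])⟩
    · exfalso
      have : a = ((0 : ℕ), false) := by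
        refine snoc_last (X := Xx) (Y := X ++ [(1, false)]) ?_
        rw [← hm, hm'form]; simp
      rw [this] at ha
      simp at ha

lemma larue {γ : MulAut F} (h : SP γ) : γ (of 0) ≠ of 0 := by
  obtain ⟨Y, hred, heq⟩ := larue_invariant h
  intro hcon
  rw [heq] at hcon
  have : Y ++ [((0 : ℕ), false)] = [] ++ [((0 : ℕ), true)] :=
    eq_of_mk_eq hred (isRed_singleton _) (by rw [hcon]; rfl)
  have := snoc_last this
  simp at this

theorem ltL_irrefl (a : FreeLD) : ¬ LtL FreeLD.mul a a := by
  rintro ⟨l, hne, hfold⟩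
  match l, hne with
  | c :: cs, _ =>
    have h1 : evQ a = List.foldl opG (opG (evQ a) (evQ c)) (cs.map evQ) := by
      conv_lhs => rw [hfold]
      rw [evQ_foldl]; rfl
    have h2 : SP ((evQ a)⁻¹ * List.foldl opG (opG (evQ a) (evQ c)) (cs.map evQ)) :=
      sp_of_foldl _ _ _
    rw [← h1, inv_mul_cancel] at h2
    exact larue h2 (by simp [MulAut.one_apply])
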